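/- arXiv:1403.0215 — 2 statements merged into one kernel-verified Lean document; each statement's English description precedes it below -/
import Mathlib

section
/- Let N ≥ 1, let Ω ⊆ ℝ^N be an open set, and let p > 1 be real. Let h : Ω → ℝ^N be a C^1 vector field with div h(x) > 0 for every x ∈ Ω. Then for every C^1 function u : ℝ^N → ℝ whose support is compact and contained in Ω and such that ∫_Ω (|h(x)|^p/(div h(x))^{p−1}) |∇u(x)|^p dx < ∞, one has ∫_Ω |u(x)|^p div h(x) dx ≤ p^p ∫_Ω (|h(x)|^p/(div h(x))^{p−1}) |∇u(x)|^p dx. -/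
open MeasureTheory Finset

noncomputable section

/-- The Euclidean divergence `div h = ∑_j ∂h_j/∂x_j`. -/
def divF (n : ℕ) (h : EuclideanSpace ℝ (Fin n) → EuclideanSpace ℝ (Fin n))
    (x : EuclideanSpace ℝ (Fin n)) : ℝ :=
  ∑ j : Fin n, fderiv ℝ h x (EuclideanSpace.single j 1) j

section Helpers

theorem abs_rpow_tendsto (q : ℝ) (hq : 0 < q) :
    Filter.Tendsto (fun s : ℝ => |s| ^ q) (nhds 0) (nhds 0) := by
  have h1 : ContinuousAt (fun x : ℝ => x ^ q) |(0:ℝ)| :=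
    Real.continuousAt_rpow_const _ _ (Or.inr hq.le)
  have := h1.comp (continuous_abs.continuousAt (x := (0:ℝ)))
  simpa [Real.zero_rpow hq.ne', Function.comp_def] using this.tendsto

theorem phi_hasDerivAt (p : ℝ) (hp : 1 < p) (t : ℝ) :
    HasDerivAt (fun s : ℝ => |s| ^ p) (p * t * |t| ^ (p - 2)) t := by
  rcases lt_trichotomy t 0 with ht | rfl | ht
  · have h1 : HasDerivAt (fun s : ℝ => (-s) ^ p) (-(p * (-t) ^ (p - 1))) t := by
      have := (Real.hasDerivAt_rpow_const (x := -t) (p := p) (Or.inl (by linarith))).comp t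
        ((hasDerivAt_id t).neg)
      simpa [mul_comm, Function.comp_def] using this
    have h2 : (fun s : ℝ => |s| ^ p) =ᶠ[nhds t] fun s => (-s) ^ p := by
      filter_upwards [Iio_mem_nhds ht] with s hs
      rw [abs_of_neg hs]
    rw [h2.hasDerivAt_iff]
    refine h1.congr_deriv ?_
    rw [abs_of_neg ht]
    have : (-t) ^ (p - 1) = (-t) * (-t) ^ (p - 2) := by
      rw [← Real.rpow_one_add' (by linarith) (by intro h; linarith)]
      ring_nf
    rw [this]; ring
  · -- t = 0
    rw [hasDerivAt_iff_tendsto]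
    simp only [sub_zero, zero_mul, smul_eq_mul, mul_zero, abs_zero,
      Real.zero_rpow (by positivity : p ≠ 0), sub_zero]
    have heq : ∀ s : ℝ, ‖s‖⁻¹ * ‖|s| ^ p‖ = |s| ^ (p - 1) := by
      intro s
      rcases eq_or_ne s 0 with rfl | hs
      · simp [Real.zero_rpow (by positivity : p ≠ 0),
          Real.zero_rpow (by intro h; linarith : p - 1 ≠ 0)]
      · rw [Real.norm_eq_abs, Real.norm_eq_abs, abs_of_nonneg (by positivity : (0:ℝ) ≤ |s| ^ p),
          ← Real.rpow_neg_one (|s|), ← Real.rpow_add (abs_pos.2 hs)]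
        ring_nf
    refine (Filter.tendsto_congr heq).2 ?_
    exact abs_rpow_tendsto _ (by linarith)
  · have h1 : HasDerivAt (fun s : ℝ => s ^ p) (p * t ^ (p - 1)) t :=
      Real.hasDerivAt_rpow_const (Or.inl ht.ne')
    have h2 : (fun s : ℝ => |s| ^ p) =ᶠ[nhds t] fun s => s ^ p := by
      filter_upwards [Ioi_mem_nhds ht] with s hs
      rw [abs_of_pos hs]
    rw [h2.hasDerivAt_iff]
    refine h1.congr_deriv ?_
    rw [abs_of_pos ht]
    have : t ^ (p - 1) = t * t ^ (p - 2) := by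
      rw [← Real.rpow_one_add' (le_of_lt ht) (by intro h; linarith)]
      ring_nf
    rw [this]; ring

theorem phi'_abs_le (p : ℝ) (hp : 1 < p) (t : ℝ) :
    |p * t * |t| ^ (p - 2)| ≤ p * |t| ^ (p - 1) := by
  rcases eq_or_ne t 0 with rfl | ht
  · simp [Real.zero_rpow (by intro h; linarith : p - 1 ≠ 0)]
  · rw [abs_mul, abs_mul, abs_of_nonneg (by positivity : (0:ℝ) ≤ |t| ^ (p-2)),
      abs_of_pos (by linarith : (0:ℝ) < p), mul_assoc]
    gcongr
    rw [← Real.rpow_one_add' (abs_nonneg t) (by intro h; linarith)]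
    ring_nf
    exact le_refl _

theorem phi'_continuous (p : ℝ) (hp : 1 < p) :
    Continuous (fun t : ℝ => p * t * |t| ^ (p - 2)) := by
  rw [continuous_iff_continuousAt]
  intro t
  rcases eq_or_ne t 0 with rfl | ht
  · rw [ContinuousAt]
    simp only [mul_zero, zero_mul, abs_zero]
    refine squeeze_zero_norm (a := fun s => p * |s| ^ (p - 1)) (fun s => ?_) ?_
    · rw [Real.norm_eq_abs]; exact phi'_abs_le p hp s
    · have := (abs_rpow_tendsto (p - 1) (by linarith)).const_mul p
      simpa using this
  · have h1 : ContinuousAt (fun s : ℝ => |s| ^ (p - 2)) t := by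
      exact (Real.continuousAt_rpow_const _ _ (Or.inl (abs_ne_zero.2 ht))).comp
        continuous_abs.continuousAt
    exact (continuousAt_const.mul continuousAt_id).mul h1

theorem phi_contDiff (p : ℝ) (hp : 1 < p) :
    ContDiff ℝ 1 (fun t : ℝ => |t| ^ p) := by
  rw [contDiff_one_iff_deriv]
  have hd : ∀ t, HasDerivAt (fun s : ℝ => |s| ^ p) (p * t * |t| ^ (p - 2)) t :=
    phi_hasDerivAt p hp
  constructor
  · exact fun t => (hd t).differentiableAt
  · have : deriv (fun s : ℝ => |s| ^ p) = fun t => p * t * |t| ^ (p - 2) :=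
      funext fun t => (hd t).deriv
    rw [this]
    exact phi'_continuous p hp

theorem cont_hcs_aux {n : ℕ} {G : Type*} [NormedAddCommGroup G]
    {Ω : Set (EuclideanSpace ℝ (Fin n))} (hΩ : IsOpen Ω)
    {K : Set (EuclideanSpace ℝ (Fin n))} (hK : IsCompact K) (hKΩ : K ⊆ Ω)
    {f : EuclideanSpace ℝ (Fin n) → G} (hf : ContinuousOn f Ω)
    (h0 : ∀ x ∉ K, f x = 0) :
    Continuous f ∧ HasCompactSupport f := by
  constructor
  · rw [continuous_iff_continuousAt]
    intro x
    by_cases hx : x ∈ Ω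
    · exact hf.continuousAt (hΩ.mem_nhds hx)
    · have hxK : x ∉ K := fun h => hx (hKΩ h)
      have : f =ᶠ[nhds x] fun _ => 0 := by
        filter_upwards [hK.isClosed.isOpen_compl.mem_nhds hxK] with y hy
        exact h0 y hy
      exact ContinuousAt.congr continuousAt_const this.symm
  · exact HasCompactSupport.intro hK h0

theorem euclidean_decomp {n : ℕ} (y : EuclideanSpace ℝ (Fin n)) :
    ∑ j : Fin n, y j • EuclideanSpace.single j (1:ℝ) = y := by
  ext i
  rw [WithLp.ofLp_sum, Finset.sum_apply]
  simp only [PiLp.smul_apply, EuclideanSpace.single_apply, smul_eq_mul]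
  simp [Finset.sum_ite_eq]

set_option maxHeartbeats 1000000 in
theorem integral_divF_eq_zero {n : ℕ} (w : EuclideanSpace ℝ (Fin n) → EuclideanSpace ℝ (Fin n))
    (hw : ContDiff ℝ 1 w) (hcs : HasCompactSupport w) :
    ∫ x, divF n w x = 0 := by
  have hint : ∀ j : Fin n, Integrable
      (fun x => fderiv ℝ w x (EuclideanSpace.single j (1:ℝ)) j) volume := by
    intro j
    apply Continuous.integrable_of_hasCompactSupport
    · have h1 : Continuous (fderiv ℝ w) := hw.continuous_fderiv one_ne_zero
      exact (EuclideanSpace.proj j (𝕜 := ℝ)).continuous.comp (h1.clm_apply continuous_const)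
    · apply HasCompactSupport.comp_left
        (g := fun L : EuclideanSpace ℝ (Fin n) →L[ℝ] EuclideanSpace ℝ (Fin n) =>
          L (EuclideanSpace.single j 1) j)
        (hcs.fderiv ℝ) (by simp)
  have hzero : ∀ j : Fin n,
      ∫ x, fderiv ℝ w x (EuclideanSpace.single j (1:ℝ)) j = 0 := by
    intro j
    set v := EuclideanSpace.single j (1:ℝ)
    set wj : EuclideanSpace ℝ (Fin n) → ℝ := fun x => w x j with hwj_def
    have hwj : ContDiff ℝ 1 wj := (EuclideanSpace.proj j (𝕜 := ℝ)).contDiff.comp hw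
    have hder : ∀ x, fderiv ℝ wj x = (EuclideanSpace.proj j (𝕜 := ℝ)).comp (fderiv ℝ w x) := by
      intro x
      exact ((EuclideanSpace.proj j (𝕜 := ℝ)).hasFDerivAt.comp x
        (hw.differentiable one_ne_zero x).hasFDerivAt).fderiv
    have hcsj : HasCompactSupport wj :=
      hcs.comp_left (g := fun y : EuclideanSpace ℝ (Fin n) => y j) (by simp)
    have h1 : Integrable (fun x => fderiv ℝ wj x v * (fun _ => (1:ℝ)) x) volume := by
      simp only [mul_one]
      apply Continuous.integrable_of_hasCompactSupport
      · exact (hwj.continuous_fderiv one_ne_zero).clm_apply continuous_const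
      · exact HasCompactSupport.comp_left (g := fun L : _ →L[ℝ] ℝ => L v) (hcsj.fderiv ℝ) (by simp)
    have h2 : Integrable (fun x => wj x * fderiv ℝ (fun _ => (1:ℝ)) x v) volume := by
      simp [fderiv_fun_const]
    have h3 : Integrable (fun x => wj x * (fun _ => (1:ℝ)) x) volume := by
      simp only [mul_one]
      exact (hwj.continuous).integrable_of_hasCompactSupport hcsj
    have := integral_mul_fderiv_eq_neg_fderiv_mul_of_integrable h1 h2 h3
      (fun x _ => hwj.differentiable one_ne_zero x) (fun x _ => differentiable_const (1:ℝ) x)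
    simp only [fderiv_fun_const, Pi.zero_apply, ContinuousLinearMap.zero_apply, mul_zero, mul_one,
      integral_zero] at this
    have h4 : ∫ x, fderiv ℝ wj x v = 0 := by linarith [this]
    calc ∫ x, fderiv ℝ w x v j = ∫ x, fderiv ℝ wj x v := by
          congr 1; ext x; rw [hder]; rfl
      _ = 0 := h4
  calc ∫ x, divF n w x
      = ∑ j : Fin n, ∫ x, fderiv ℝ w x (EuclideanSpace.single j (1:ℝ)) j :=
        integral_finset_sum _ (fun j _ => hint j)
    _ = 0 := by simp [hzero]

end Helpers

set_option maxHeartbeats 2000000 in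
/-- Mitidieri-type lemma: if `div h > 0` on the open set `Ω`, then
`∫_Ω |u|^p div h ≤ p^p ∫_Ω (|h|^p/(div h)^{p-1}) |∇u|^p` for compactly supported `C¹`
functions `u` with support in `Ω` for which the right-hand side is finite. -/
theorem hardy_lemma_euclidean (n : ℕ) (hn : 1 ≤ n)
    (Ω : Set (EuclideanSpace ℝ (Fin n))) (hΩ : IsOpen Ω)
    (p : ℝ) (hp : 1 < p)
    (h : EuclideanSpace ℝ (Fin n) → EuclideanSpace ℝ (Fin n))
    (hh : ContDiffOn ℝ 1 h Ω)
    (hdiv : ∀ x ∈ Ω, 0 < divF n h x)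
    (u : EuclideanSpace ℝ (Fin n) → ℝ) (hu : ContDiff ℝ 1 u)
    (hcs : HasCompactSupport u) (hsupp : tsupport u ⊆ Ω)
    (hfin : ∫⁻ x in Ω,
        ENNReal.ofReal (‖h x‖ ^ p / (divF n h x) ^ (p - 1) * ‖gradient u x‖ ^ p) < ⊤) :
    ∫⁻ x in Ω, ENNReal.ofReal (|u x| ^ p * divF n h x) ≤
      ENNReal.ofReal (p ^ p) *
        ∫⁻ x in Ω,
          ENNReal.ofReal (‖h x‖ ^ p / (divF n h x) ^ (p - 1) * ‖gradient u x‖ ^ p) := by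
  have hp0 : (0:ℝ) < p := by linarith
  have hp1 : p - 1 ≠ 0 := by intro h'; linarith
  set K : Set (EuclideanSpace ℝ (Fin n)) := tsupport u with hK_def
  have hKc : IsCompact K := hcs
  have hKΩ : K ⊆ Ω := hsupp
  set d : EuclideanSpace ℝ (Fin n) → ℝ := divF n h with hd_def
  have hu_diff : Differentiable ℝ u := hu.differentiable one_ne_zero
  have hv_cd : ContDiff ℝ 1 (fun x => |u x| ^ p) := (phi_contDiff p hp).comp hu
  have hu0 : ∀ x, x ∉ K → u x = 0 := fun x hx => image_eq_zero_of_notMem_tsupport hx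
  have hv0 : ∀ x, x ∉ K → |u x| ^ p = 0 := by
    intro x hx
    rw [hu0 x hx]
    simp [Real.zero_rpow hp0.ne']
  have hfv : ∀ x, fderiv ℝ (fun x => |u x| ^ p) x
      = (p * u x * |u x| ^ (p - 2)) • fderiv ℝ u x := by
    intro x
    exact ((phi_hasDerivAt p hp (u x)).comp_hasFDerivAt x (hu_diff x).hasFDerivAt).fderiv
  have hfv0 : ∀ x, x ∉ K → fderiv ℝ (fun x => |u x| ^ p) x = 0 := by
    intro x hx
    have hev : (fun x => |u x| ^ p) =ᶠ[nhds x] (fun _ => (0:ℝ)) := by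
      filter_upwards [hKc.isClosed.isOpen_compl.mem_nhds hx] with y hy
      exact hv0 y hy
    rw [hev.fderiv_eq]
    exact fderiv_const_apply 0
  have hgrad : ∀ x, ‖gradient u x‖ = ‖fderiv ℝ u x‖ := by
    intro x
    simp [gradient, LinearIsometryEquiv.norm_map]
  -- the vector field w = |u|^p • h
  set w : EuclideanSpace ℝ (Fin n) → EuclideanSpace ℝ (Fin n) :=
    fun x => |u x| ^ p • h x with hw_def
  have hw0 : ∀ x, x ∉ K → w x = 0 := by
    intro x hx
    simp [hw_def, hv0 x hx]
  have hw_cd : ContDiff ℝ 1 w := by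
    rw [contDiff_iff_contDiffAt]
    intro x
    by_cases hx : x ∈ Ω
    · exact (hv_cd.contDiffAt).smul (hh.contDiffAt (hΩ.mem_nhds hx))
    · have hxK : x ∉ K := fun hk => hx (hKΩ hk)
      have hev : w =ᶠ[nhds x] (fun _ => (0 : EuclideanSpace ℝ (Fin n))) := by
        filter_upwards [hKc.isClosed.isOpen_compl.mem_nhds hxK] with y hy
        exact hw0 y hy
      exact contDiffAt_const.congr_of_eventuallyEq hev
  have hw_cs : HasCompactSupport w := HasCompactSupport.intro hKc hw0
  -- divergence identity
  have hdivw : ∀ x, divF n w x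
      = |u x| ^ p * d x + fderiv ℝ (fun x => |u x| ^ p) x (h x) := by
    intro x
    by_cases hx : x ∈ Ω
    · have hhx : HasFDerivAt h (fderiv ℝ h x) x :=
        (((hh.contDiffAt (hΩ.mem_nhds hx)).differentiableAt one_ne_zero)).hasFDerivAt
      have hvx : HasFDerivAt (fun x => |u x| ^ p)
          (fderiv ℝ (fun x => |u x| ^ p) x) x :=
        (hv_cd.differentiable one_ne_zero x).hasFDerivAt
      have hfw : fderiv ℝ w x
          = |u x| ^ p • fderiv ℝ h x
            + (fderiv ℝ (fun x => |u x| ^ p) x).smulRight (h x) :=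
        (hvx.smul hhx).fderiv
      have hterm : ∀ j : Fin n,
          fderiv ℝ w x (EuclideanSpace.single j 1) j
            = |u x| ^ p * fderiv ℝ h x (EuclideanSpace.single j 1) j
              + fderiv ℝ (fun x => |u x| ^ p) x (EuclideanSpace.single j 1) * h x j := by
        intro j
        rw [hfw]
        simp [ContinuousLinearMap.add_apply, ContinuousLinearMap.smul_apply,
          ContinuousLinearMap.smulRight_apply, PiLp.add_apply, PiLp.smul_apply,
          smul_eq_mul]
      have hsum2 : ∑ j : Fin n,
          fderiv ℝ (fun x => |u x| ^ p) x (EuclideanSpace.single j 1) * h x j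
            = fderiv ℝ (fun x => |u x| ^ p) x (h x) := by
        conv_rhs => rw [← euclidean_decomp (h x)]
        rw [map_sum]
        refine Finset.sum_congr rfl (fun j _ => ?_)
        rw [(fderiv ℝ (fun x => |u x| ^ p) x).map_smul]
        simp [smul_eq_mul, mul_comm]
      calc divF n w x
          = ∑ j : Fin n, (|u x| ^ p * fderiv ℝ h x (EuclideanSpace.single j 1) j
              + fderiv ℝ (fun x => |u x| ^ p) x (EuclideanSpace.single j 1) * h x j) := by
            rw [divF]
            exact Finset.sum_congr rfl (fun j _ => hterm j)
        _ = |u x| ^ p * d x + fderiv ℝ (fun x => |u x| ^ p) x (h x) := by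
            rw [Finset.sum_add_distrib, ← Finset.mul_sum, hsum2, hd_def, divF]
    · have hxK : x ∉ K := fun hk => hx (hKΩ hk)
      have hfw : fderiv ℝ w x = 0 := by
        have hev : w =ᶠ[nhds x] (fun _ => (0 : EuclideanSpace ℝ (Fin n))) := by
          filter_upwards [hKc.isClosed.isOpen_compl.mem_nhds hxK] with y hy
          exact hw0 y hy
        rw [hev.fderiv_eq]
        exact fderiv_const_apply 0
      rw [divF, hv0 x hxK, hfv0 x hxK]
      simp [hfw]
  -- continuity of d on Ω
  have hd_cont : ContinuousOn d Ω := by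
    have hfd : ContinuousOn (fderiv ℝ h) Ω := hh.continuousOn_fderiv_of_isOpen hΩ le_rfl
    rw [hd_def]
    show ContinuousOn (fun x => ∑ j : Fin n, fderiv ℝ h x (EuclideanSpace.single j 1) j) Ω
    refine continuousOn_finset_sum _ (fun j _ => ?_)
    exact (EuclideanSpace.proj j (𝕜 := ℝ)).continuous.comp_continuousOn
      (hfd.clm_apply continuousOn_const)
  -- integrability of the three functions
  have hA_pair : Continuous (fun x => |u x| ^ p * d x)
      ∧ HasCompactSupport (fun x => |u x| ^ p * d x) :=
    cont_hcs_aux hΩ hKc hKΩ ((hv_cd.continuous.continuousOn).mul hd_cont)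
      (fun x hx => by rw [hv0 x hx, zero_mul])
  have hA_int : Integrable (fun x => |u x| ^ p * d x) volume :=
    hA_pair.1.integrable_of_hasCompactSupport hA_pair.2
  have hB_pair : Continuous (fun x => fderiv ℝ (fun x => |u x| ^ p) x (h x))
      ∧ HasCompactSupport (fun x => fderiv ℝ (fun x => |u x| ^ p) x (h x)) :=
    cont_hcs_aux hΩ hKc hKΩ
      (((hv_cd.continuous_fderiv one_ne_zero).continuousOn).clm_apply (hh.continuousOn))
      (fun x hx => by rw [hfv0 x hx]; rfl)
  have hB_int : Integrable (fun x => fderiv ℝ (fun x => |u x| ^ p) x (h x)) volume :=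
    hB_pair.1.integrable_of_hasCompactSupport hB_pair.2
  have hBound_cont : ContinuousOn
      (fun x => |u x| ^ (p-1) * (‖fderiv ℝ u x‖ * ‖h x‖)) Ω := by
    refine ContinuousOn.mul ?_ (ContinuousOn.mul ?_ (hh.continuousOn.norm))
    · exact ((continuous_abs.comp hu.continuous).rpow_const
        (fun x => Or.inr (by linarith))).continuousOn
    · exact ((hu.continuous_fderiv one_ne_zero).norm).continuousOn
  have hBound0 : ∀ x, x ∉ K → |u x| ^ (p-1) * (‖fderiv ℝ u x‖ * ‖h x‖) = 0 := by
    intro x hx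
    rw [hu0 x hx]
    simp [Real.zero_rpow hp1]
  have hBound_pair := cont_hcs_aux hΩ hKc hKΩ hBound_cont hBound0
  have hBound_int : Integrable (fun x => |u x| ^ (p-1) * (‖fderiv ℝ u x‖ * ‖h x‖)) volume :=
    hBound_pair.1.integrable_of_hasCompactSupport hBound_pair.2
  -- integration by parts
  have hIBP : ∫ x, |u x| ^ p * d x
      = - ∫ x, fderiv ℝ (fun x => |u x| ^ p) x (h x) := by
    have heq : (fun x => |u x| ^ p * d x + fderiv ℝ (fun x => |u x| ^ p) x (h x))
        = divF n w := (funext hdivw).symm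
    have hzero : ∫ x, (|u x| ^ p * d x + fderiv ℝ (fun x => |u x| ^ p) x (h x)) = 0 := by
      rw [heq]
      exact integral_divF_eq_zero w hw_cd hw_cs
    rw [integral_add hA_int hB_int] at hzero
    linarith
  -- pointwise bound on B
  have hnormB : ∀ x, ‖fderiv ℝ (fun x => |u x| ^ p) x (h x)‖
      ≤ p * (|u x| ^ (p-1) * (‖fderiv ℝ u x‖ * ‖h x‖)) := by
    intro x
    have h1 : ‖fderiv ℝ (fun x => |u x| ^ p) x‖ ≤ p * |u x| ^ (p - 1) * ‖fderiv ℝ u x‖ := by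
      rw [hfv x, norm_smul]
      gcongr
      calc ‖p * u x * |u x| ^ (p - 2)‖ = |p * u x * |u x| ^ (p - 2)| := Real.norm_eq_abs _
        _ ≤ p * |u x| ^ (p - 1) := phi'_abs_le p hp (u x)
    calc ‖fderiv ℝ (fun x => |u x| ^ p) x (h x)‖
        ≤ ‖fderiv ℝ (fun x => |u x| ^ p) x‖ * ‖h x‖ :=
          (fderiv ℝ (fun x => |u x| ^ p) x).le_opNorm _
      _ ≤ (p * |u x| ^ (p - 1) * ‖fderiv ℝ u x‖) * ‖h x‖ := by
          gcongr
      _ = p * (|u x| ^ (p-1) * (‖fderiv ℝ u x‖ * ‖h x‖)) := by ring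
  -- the real inequality over Ω
  have hset_A : ∫ x in Ω, |u x| ^ p * d x = ∫ x, |u x| ^ p * d x :=
    setIntegral_eq_integral_of_forall_compl_eq_zero
      (fun x hx => by rw [hv0 x (fun hk => hx (hKΩ hk)), zero_mul])
  have hset_Bound : ∫ x in Ω, |u x| ^ (p-1) * (‖fderiv ℝ u x‖ * ‖h x‖)
      = ∫ x, |u x| ^ (p-1) * (‖fderiv ℝ u x‖ * ‖h x‖) :=
    setIntegral_eq_integral_of_forall_compl_eq_zero
      (fun x hx => hBound0 x (fun hk => hx (hKΩ hk)))
  have hreal : ∫ x in Ω, |u x| ^ p * d x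
      ≤ p * ∫ x in Ω, |u x| ^ (p-1) * (‖fderiv ℝ u x‖ * ‖h x‖) := by
    rw [hset_A, hset_Bound, hIBP]
    calc - ∫ x, fderiv ℝ (fun x => |u x| ^ p) x (h x)
        ≤ |∫ x, fderiv ℝ (fun x => |u x| ^ p) x (h x)| := neg_le_abs _
      _ ≤ ∫ x, ‖fderiv ℝ (fun x => |u x| ^ p) x (h x)‖ := by
          rw [← Real.norm_eq_abs]
          exact norm_integral_le_integral_norm _
      _ ≤ ∫ x, p * (|u x| ^ (p-1) * (‖fderiv ℝ u x‖ * ‖h x‖)) :=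
          integral_mono hB_int.norm (hBound_int.const_mul p) (fun x => hnormB x)
      _ = p * ∫ x, |u x| ^ (p-1) * (‖fderiv ℝ u x‖ * ‖h x‖) := integral_const_mul _ _
  -- ENNReal part
  have hdΩ : ∀ x ∈ Ω, 0 < d x := hdiv
  have hmeasΩ := hΩ.measurableSet
  have hpne : p ≠ 0 := hp0.ne'
  have hq_pos : (0:ℝ) < p/(p-1) := div_pos hp0 (by linarith)
  have hA_nonneg : 0 ≤ᵐ[volume.restrict Ω] fun x => |u x| ^ p * d x := by
    filter_upwards [ae_restrict_mem hmeasΩ] with x hx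
    exact mul_nonneg (Real.rpow_nonneg (abs_nonneg _) _) (hdΩ x hx).le
  have hL : ENNReal.ofReal (∫ x in Ω, |u x| ^ p * d x)
      = ∫⁻ x in Ω, ENNReal.ofReal (|u x| ^ p * d x) :=
    ofReal_integral_eq_lintegral_ofReal hA_int.restrict hA_nonneg
  have hBo : ENNReal.ofReal (∫ x in Ω, |u x| ^ (p-1) * (‖fderiv ℝ u x‖ * ‖h x‖))
      = ∫⁻ x in Ω, ENNReal.ofReal (|u x| ^ (p-1) * (‖fderiv ℝ u x‖ * ‖h x‖)) :=
    ofReal_integral_eq_lintegral_ofReal hBound_int.restrict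
      (Filter.Eventually.of_forall fun x => by positivity)
  set F : EuclideanSpace ℝ (Fin n) → ENNReal :=
    fun x => ENNReal.ofReal (|u x| ^ (p-1) * d x ^ ((p-1)/p)) with hF_def
  set G : EuclideanSpace ℝ (Fin n) → ENNReal :=
    fun x => ENNReal.ofReal (‖fderiv ℝ u x‖ * ‖h x‖ * d x ^ (-((p-1)/p))) with hG_def
  have hF_meas : AEMeasurable F (volume.restrict Ω) := by
    refine ContinuousOn.aemeasurable ?_ hmeasΩ
    apply ENNReal.continuous_ofReal.comp_continuousOn
    refine ContinuousOn.mul ?_ (hd_cont.rpow_const (fun x hx => Or.inl (hdΩ x hx).ne'))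
    exact ((continuous_abs.comp hu.continuous).rpow_const
      (fun x => Or.inr (by linarith))).continuousOn
  have hG_meas : AEMeasurable G (volume.restrict Ω) := by
    refine ContinuousOn.aemeasurable ?_ hmeasΩ
    apply ENNReal.continuous_ofReal.comp_continuousOn
    refine ContinuousOn.mul (ContinuousOn.mul ?_ hh.continuousOn.norm)
      (hd_cont.rpow_const (fun x hx => Or.inl (hdΩ x hx).ne'))
    exact ((hu.continuous_fderiv one_ne_zero).norm).continuousOn
  have hpq : Real.HolderConjugate (p/(p-1)) p := (Real.HolderConjugate.conjExponent hp).symm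
  have hHolder := ENNReal.lintegral_mul_le_Lp_mul_Lq (volume.restrict Ω) hpq hF_meas hG_meas
  have e1 : (p - 1) * (p/(p-1)) = p := by field_simp
  have e2 : (p-1)/p * (p/(p-1)) = 1 := by field_simp
  have hFq : ∫⁻ x in Ω, F x ^ (p/(p-1)) = ∫⁻ x in Ω, ENNReal.ofReal (|u x| ^ p * d x) := by
    apply lintegral_congr_ae
    filter_upwards [ae_restrict_mem hmeasΩ] with x hx
    simp only [hF_def]
    rw [ENNReal.ofReal_rpow_of_nonneg
      (mul_nonneg (Real.rpow_nonneg (abs_nonneg _) _) (Real.rpow_nonneg (hdΩ x hx).le _))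
      hq_pos.le]
    congr 1
    rw [Real.mul_rpow (by positivity) (Real.rpow_nonneg (hdΩ x hx).le _),
        ← Real.rpow_mul (abs_nonneg _), ← Real.rpow_mul (hdΩ x hx).le, e1, e2, Real.rpow_one]
  have hGp : ∫⁻ x in Ω, G x ^ p
      = ∫⁻ x in Ω, ENNReal.ofReal (‖h x‖ ^ p / d x ^ (p - 1) * ‖gradient u x‖ ^ p) := by
    apply lintegral_congr_ae
    filter_upwards [ae_restrict_mem hmeasΩ] with x hx
    simp only [hG_def]
    rw [ENNReal.ofReal_rpow_of_nonneg
      (mul_nonneg (mul_nonneg (norm_nonneg _) (norm_nonneg _))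
        (Real.rpow_nonneg (hdΩ x hx).le _)) hp0.le]
    congr 1
    rw [Real.mul_rpow (by positivity) (Real.rpow_nonneg (hdΩ x hx).le _),
        Real.mul_rpow (norm_nonneg _) (norm_nonneg _),
        ← Real.rpow_mul (hdΩ x hx).le, hgrad x]
    have e3 : -((p-1)/p) * p = -(p-1) := by field_simp
    rw [e3, Real.rpow_neg (hdΩ x hx).le, div_eq_mul_inv]
    ring
  have hFGeq : ∫⁻ x in Ω, ENNReal.ofReal (|u x| ^ (p-1) * (‖fderiv ℝ u x‖ * ‖h x‖))
      = ∫⁻ x in Ω, (F * G) x := by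
    apply lintegral_congr_ae
    filter_upwards [ae_restrict_mem hmeasΩ] with x hx
    have h1 : d x ^ ((p-1)/p) * d x ^ (-((p-1)/p)) = 1 := by
      rw [← Real.rpow_add (hdΩ x hx)]
      simp
    show ENNReal.ofReal _ = F x * G x
    simp only [hF_def, hG_def]
    rw [← ENNReal.ofReal_mul
      (mul_nonneg (Real.rpow_nonneg (abs_nonneg _) _) (Real.rpow_nonneg (hdΩ x hx).le _))]
    congr 1
    calc |u x| ^ (p-1) * (‖fderiv ℝ u x‖ * ‖h x‖)
        = |u x| ^ (p-1) * (‖fderiv ℝ u x‖ * ‖h x‖)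
            * (d x ^ ((p-1)/p) * d x ^ (-((p-1)/p))) := by rw [h1, mul_one]
      _ = |u x| ^ (p-1) * d x ^ ((p-1)/p)
            * (‖fderiv ℝ u x‖ * ‖h x‖ * d x ^ (-((p-1)/p))) := by ring
  have hmain : ∫⁻ x in Ω, ENNReal.ofReal (|u x| ^ p * d x)
      ≤ ENNReal.ofReal p *
        ((∫⁻ x in Ω, ENNReal.ofReal (|u x| ^ p * d x)) ^ (1/(p/(p-1))) *
         (∫⁻ x in Ω, ENNReal.ofReal (‖h x‖ ^ p / d x ^ (p - 1) * ‖gradient u x‖ ^ p)) ^ (1/p)) := by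
    calc ∫⁻ x in Ω, ENNReal.ofReal (|u x| ^ p * d x)
        = ENNReal.ofReal (∫ x in Ω, |u x| ^ p * d x) := hL.symm
      _ ≤ ENNReal.ofReal (p * ∫ x in Ω, |u x| ^ (p-1) * (‖fderiv ℝ u x‖ * ‖h x‖)) :=
          ENNReal.ofReal_le_ofReal hreal
      _ = ENNReal.ofReal p
            * ENNReal.ofReal (∫ x in Ω, |u x| ^ (p-1) * (‖fderiv ℝ u x‖ * ‖h x‖)) :=
          ENNReal.ofReal_mul hp0.le
      _ = ENNReal.ofReal p * ∫⁻ x in Ω, (F * G) x := by rw [hBo, hFGeq]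
      _ ≤ _ := by
          refine mul_le_mul_right ?_ _
          calc ∫⁻ x in Ω, (F * G) x
              ≤ (∫⁻ x in Ω, F x ^ (p/(p-1))) ^ (1/(p/(p-1)))
                * (∫⁻ x in Ω, G x ^ p) ^ (1/p) := hHolder
            _ = _ := by rw [hFq, hGp]
  set L := ∫⁻ x in Ω, ENNReal.ofReal (|u x| ^ p * d x) with hLdef
  set R := ∫⁻ x in Ω, ENNReal.ofReal (‖h x‖ ^ p / d x ^ (p - 1) * ‖gradient u x‖ ^ p) with hRdef
  by_cases hL0 : L = 0
  · rw [hL0]; exact zero_le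
  have hLt : L ≠ ⊤ := by rw [← hL]; exact ENNReal.ofReal_ne_top
  have hq_sum : 1/(p/(p-1)) + 1/p = 1 := by rw [one_div, one_div, hpq.inv_add_inv_eq_one]
  have hsplit : L = L ^ (1/(p/(p-1))) * L ^ (1/p) := by
    rw [← ENNReal.rpow_add _ _ hL0 hLt, hq_sum, ENNReal.rpow_one]
  have hcancel_ne0 : L ^ (1/(p/(p-1))) ≠ 0 := by
    simp [ENNReal.rpow_eq_zero_iff, hL0, hLt]
  have hcancel_net : L ^ (1/(p/(p-1))) ≠ ⊤ :=
    ENNReal.rpow_ne_top_of_nonneg (le_of_lt (by positivity)) hLt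
  have hstep : L ^ (1/p) ≤ ENNReal.ofReal p * R ^ (1/p) := by
    rw [← ENNReal.mul_le_mul_iff_right hcancel_ne0 hcancel_net]
    calc L ^ (1/(p/(p-1))) * L ^ (1/p) = L := hsplit.symm
      _ ≤ ENNReal.ofReal p * (L ^ (1/(p/(p-1))) * R ^ (1/p)) := hmain
      _ = L ^ (1/(p/(p-1))) * (ENNReal.ofReal p * R ^ (1/p)) := by ring
  have hfinal := ENNReal.rpow_le_rpow hstep hp0.le
  rw [← ENNReal.rpow_mul, one_div, inv_mul_cancel₀ hp0.ne', ENNReal.rpow_one] at hfinal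
  rw [ENNReal.mul_rpow_of_nonneg _ _ hp0.le, ← ENNReal.rpow_mul,
      inv_mul_cancel₀ hp0.ne', ENNReal.rpow_one, ENNReal.ofReal_rpow_of_pos hp0] at hfinal
  exact hfinal


end
end

section
/- Let Ω ⊆ ℝ^N be open and let p > 1 be real. Let h = (h^{(1)},…,h^{(k)}) : Ω → ℝ^N be a C^1 vector field with div_λ h(x) > 0 for every x ∈ Ω. Then for every C^1 function u : ℝ^N → ℝ whose support is compact and contained in Ω and such that ∫_Ω (|h(x)|^p/(div_λ h(x))^{p−1}) |∇_λ u(x)|^p dx < ∞, one has ∫_Ω |u(x)|^p div_λ h(x) dx ≤ p^p ∫_Ω (|h(x)|^p/(div_λ h(x))^{p−1}) |∇_λ u(x)|^p dx. -/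
open MeasureTheory Finset

noncomputable section

/-- `ℝ^N = ℝ^{N_1} × ⋯ × ℝ^{N_k}` with the Euclidean norm. -/
abbrev Eb {k : ℕ} (N : Fin k → ℕ) : Type :=
  PiLp 2 (fun i : Fin k => EuclideanSpace ℝ (Fin (N i)))

instance {k : ℕ} (N : Fin k → ℕ) : MeasurableSpace (Eb N) := WithLp.measurableSpace 2 _
instance {k : ℕ} (N : Fin k → ℕ) : BorelSpace (Eb N) := PiLp.borelSpace 2

/-- `λ_i(x) = ∏_j |x^{(j)}|^{α_{ij}}`. -/
def lamF {k : ℕ} (N : Fin k → ℕ) (α : Fin k → Fin k → ℝ) (i : Fin k) (x : Eb N) : ℝ :=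
  ∏ j : Fin k, ‖x j‖ ^ (α i j)

/-- the dilations `δ_r(x) = (r^{σ_1} x^{(1)}, …, r^{σ_k} x^{(k)})`. -/
def dilF {k : ℕ} (N : Fin k → ℕ) (σ : Fin k → ℝ) (r : ℝ) (x : Eb N) : Eb N :=
  (WithLp.equiv 2 _).symm (fun i => (r ^ σ i) • x i)

/-- the homogeneous norm `[[x]]_λ`. -/
def hnormF {k : ℕ} (N : Fin k → ℕ) (α : Fin k → Fin k → ℝ) (σ : Fin k → ℝ) (x : Eb N) : ℝ :=
  (∑ j : Fin k, (∏ i ∈ Finset.univ.erase j, (lamF N α i x) ^ 2) * (σ j) ^ 2 * ‖x j‖ ^ 2)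
    ^ (1 / (2 * (1 + ∑ i : Fin k, (σ i - 1))))

/-- the homogeneous distance from the origin `‖x‖_λ`. -/
def dnormF {k : ℕ} (N : Fin k → ℕ) (σ : Fin k → ℝ) (x : Eb N) : ℝ :=
  (∑ j : Fin k, ‖x j‖ ^ (2 * ∏ i ∈ Finset.univ.erase j, σ i))
    ^ (1 / (2 * ∏ i : Fin k, σ i))

/-- `∇_λ u = (λ_1 ∇_{x^{(1)}} u, …, λ_k ∇_{x^{(k)}} u)`. -/
def lgradF {k : ℕ} (N : Fin k → ℕ) (α : Fin k → Fin k → ℝ) (u : Eb N → ℝ) (x : Eb N) : Eb N :=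
  (WithLp.equiv 2 _).symm (fun i => lamF N α i x • (gradient u x) i)

/-- the standard basis vector of `ℝ^N` in block `i`, coordinate `j`. -/
def basisVecF {k : ℕ} (N : Fin k → ℕ) (i : Fin k) (j : Fin (N i)) : Eb N :=
  (WithLp.equiv 2 _).symm (Pi.single i (EuclideanSpace.single j 1))

/-- `div_λ h = ∑_i λ_i div_{x^{(i)}} h^{(i)}`. -/
def divlamF {k : ℕ} (N : Fin k → ℕ) (α : Fin k → Fin k → ℝ) (h : Eb N → Eb N) (x : Eb N) : ℝ :=
  ∑ i : Fin k, lamF N α i x * ∑ j : Fin (N i), fderiv ℝ h x (basisVecF N i j) i j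

/-- `Δ_λ u = ∑_i λ_i^2 Δ_{x^{(i)}} u`. -/
def lapLamF {k : ℕ} (N : Fin k → ℕ) (α : Fin k → Fin k → ℝ) (u : Eb N → ℝ) (x : Eb N) : ℝ :=
  ∑ i : Fin k, (lamF N α i x) ^ 2 * ∑ j : Fin (N i),
    fderiv ℝ (fun y => fderiv ℝ u y (basisVecF N i j)) x (basisVecF N i j)

/-- the homogeneous dimension `Q = σ_1 N_1 + ⋯ + σ_k N_k`. -/
def QF {k : ℕ} (N : Fin k → ℕ) (σ : Fin k → ℝ) : ℝ :=
  ∑ i : Fin k, σ i * N i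

----------------------------------------------------------------
-- scalar lemmas (verified already)

lemma psi_abs_eq {p : ℝ} (hp : 1 < p) (t : ℝ) :
    |p * |t| ^ (p - 2) * t| = p * |t| ^ (p - 1) := by
  rcases eq_or_ne t 0 with rfl | ht
  · simp [Real.zero_rpow (by linarith : p - 1 ≠ 0)]
  · have h0 : (0:ℝ) < |t| := abs_pos.2 ht
    rw [abs_mul, abs_mul, abs_of_nonneg (by linarith : (0:ℝ) ≤ p),
      abs_of_nonneg (Real.rpow_nonneg (abs_nonneg t) _), mul_assoc,
      show p - 1 = (p - 2) + 1 by ring, Real.rpow_add_one (ne_of_gt h0)]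

lemma abs_rpow_hasDerivAt {p : ℝ} (hp : 1 < p) (t : ℝ) :
    HasDerivAt (fun s : ℝ => |s| ^ p) (p * |t| ^ (p - 2) * t) t := by
  rcases lt_trichotomy t 0 with ht | rfl | ht
  · have h1 : HasDerivAt (fun s : ℝ => (-s) ^ p) (p * (-t) ^ (p - 1) * (-1)) t := by
      have := (Real.hasDerivAt_rpow_const (x := -t) (p := p) (Or.inl (by linarith))).comp t
        ((hasDerivAt_id t).neg)
      simpa [Function.comp_def] using this
    have h2 : (fun s : ℝ => (-s) ^ p) =ᶠ[nhds t] fun s => |s| ^ p := by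
      filter_upwards [eventually_lt_nhds ht] with s hs
      rw [abs_of_neg hs]
    have h3 : p * (-t) ^ (p - 1) * (-1) = p * |t| ^ (p - 2) * t := by
      rw [abs_of_neg ht, show p - 1 = (p - 2) + 1 by ring,
        Real.rpow_add_one (by linarith : -t ≠ 0)]
      ring
    exact h3 ▸ h1.congr_of_eventuallyEq h2.symm
  · rw [hasDerivAt_iff_tendsto_slope]
    have h0 : |(0:ℝ)| ^ p = 0 := by simp [Real.zero_rpow (by linarith : p ≠ 0)]
    have hb : Filter.Tendsto (fun s : ℝ => |s| ^ (p - 1)) (nhdsWithin 0 {(0:ℝ)}ᶜ) (nhds 0) := by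
      have : ContinuousAt (fun s : ℝ => |s| ^ (p - 1)) 0 :=
        continuous_abs.continuousAt.rpow_const (Or.inr (by linarith))
      have := this.tendsto
      rw [show |(0:ℝ)| ^ (p-1) = 0 by simp [Real.zero_rpow (by linarith : p - 1 ≠ 0)]] at this
      exact this.mono_left nhdsWithin_le_nhds
    have heq : ∀ s ∈ ({(0:ℝ)}ᶜ : Set ℝ), ‖slope (fun s : ℝ => |s| ^ p) 0 s‖ ≤ |s| ^ (p - 1) := by
      intro s hs
      have hs0 : s ≠ (0:ℝ) := hs
      have h0' : (0:ℝ) < |s| := abs_pos.2 hs0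
      rw [slope_def_field, h0, sub_zero, sub_zero, Real.norm_eq_abs,
        Real.rpow_sub h0', Real.rpow_one, abs_div,
        abs_of_nonneg (Real.rpow_nonneg (abs_nonneg s) p)]
    have := squeeze_zero_norm' (Filter.eventually_iff_exists_mem.2
      ⟨{(0:ℝ)}ᶜ, self_mem_nhdsWithin, heq⟩) hb
    simpa [mul_zero] using this
  · have h1 : HasDerivAt (fun s : ℝ => s ^ p) (p * t ^ (p - 1)) t :=
      Real.hasDerivAt_rpow_const (Or.inl ht.ne')
    have h2 : (fun s : ℝ => s ^ p) =ᶠ[nhds t] fun s => |s| ^ p := by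
      filter_upwards [eventually_gt_nhds ht] with s hs
      rw [abs_of_pos hs]
    have h3 : p * t ^ (p - 1) = p * |t| ^ (p - 2) * t := by
      rw [abs_of_pos ht, show p - 1 = (p - 2) + 1 by ring, Real.rpow_add_one ht.ne']
      ring
    exact h3 ▸ h1.congr_of_eventuallyEq h2.symm

lemma psi_continuous {p : ℝ} (hp : 1 < p) :
    Continuous (fun t : ℝ => p * |t| ^ (p - 2) * t) := by
  rw [continuous_iff_continuousAt]
  intro t
  rcases eq_or_ne t 0 with rfl | ht
  · rw [ContinuousAt, show p * |(0:ℝ)| ^ (p - 2) * 0 = 0 by ring]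
    apply squeeze_zero_norm (fun s => le_of_eq (by rw [Real.norm_eq_abs, psi_abs_eq hp]))
    have : ContinuousAt (fun s : ℝ => p * |s| ^ (p - 1)) 0 :=
      (continuousAt_const.mul (continuous_abs.continuousAt.rpow_const (Or.inr (by linarith))))
    have := this.tendsto
    rwa [show p * |(0:ℝ)| ^ (p-1) = 0 by simp [Real.zero_rpow (by linarith : p - 1 ≠ 0)]] at this
  · exact (continuousAt_const.mul ((continuous_abs.continuousAt).rpow_const
      (Or.inl (abs_ne_zero.2 ht)))).mul continuousAt_id

----------------------------------------------------------------
-- lamF lemmas (verified already)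

lemma lamF_continuous {k : ℕ} (N : Fin k → ℕ) (α : Fin k → Fin k → ℝ)
    (hα : ∀ i j, 0 ≤ α i j) (i : Fin k) : Continuous (lamF N α i) := by
  apply continuous_finset_prod
  intro j _
  rw [continuous_iff_continuousAt]
  intro x
  exact (((PiLp.proj (𝕜 := ℝ) 2 _ j).continuous.norm).continuousAt).rpow_const (Or.inr (hα i j))

lemma lamF_nonneg {k : ℕ} (N : Fin k → ℕ) (α : Fin k → Fin k → ℝ) (i : Fin k) (x : Eb N) :
    0 ≤ lamF N α i x :=
  Finset.prod_nonneg fun j _ => Real.rpow_nonneg (norm_nonneg _) _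

lemma lamF_lineDeriv_zero {k : ℕ} (N : Fin k → ℕ) (α : Fin k → Fin k → ℝ)
    (hαii : ∀ i, α i i = 0) (i : Fin k) (j : Fin (N i)) (x : Eb N) :
    HasLineDerivAt ℝ (lamF N α i) 0 x (basisVecF N i j) := by
  have hconst : (fun t : ℝ => lamF N α i (x + t • basisVecF N i j)) = fun _ => lamF N α i x := by
    funext t
    unfold lamF
    apply Finset.prod_congr rfl
    intro j' _
    rcases eq_or_ne j' i with rfl | hne
    · rw [hαii j', Real.rpow_zero, Real.rpow_zero]
    · congr 1
      show ‖x j' + t • (Pi.single i (EuclideanSpace.single j 1) :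
        ∀ i', EuclideanSpace ℝ (Fin (N i'))) j'‖ = ‖x j'‖
      rw [Pi.single_eq_of_ne hne]
      simp
  show HasDerivAt (fun t : ℝ => lamF N α i (x + t • basisVecF N i j)) 0 0
  rw [hconst]
  exact hasDerivAt_const 0 _

----------------------------------------------------------------
-- gradient lemmas

lemma grad_inner {F : Type*} [NormedAddCommGroup F] [InnerProductSpace ℝ F] [CompleteSpace F]
    (w : F → ℝ) (x y : F) : (inner ℝ (gradient w x) y : ℝ) = fderiv ℝ w x y := by
  unfold gradient
  exact InnerProductSpace.toDual_symm_apply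

lemma grad_continuous {F : Type*} [NormedAddCommGroup F] [InnerProductSpace ℝ F]
    [CompleteSpace F] {w : F → ℝ} (hw : ContDiff ℝ 1 w) : Continuous (gradient w) := by
  unfold gradient
  exact (InnerProductSpace.toDual ℝ F).symm.continuous.comp (hw.continuous_fderiv one_ne_zero)

lemma grad_smul_of_fderiv {F : Type*} [NormedAddCommGroup F] [InnerProductSpace ℝ F]
    [CompleteSpace F] {w u : F → ℝ} {c : ℝ} {x : F} (hw : fderiv ℝ w x = c • fderiv ℝ u x) :
    gradient w x = c • gradient u x := by
  unfold gradient
  rw [hw, _root_.map_smul]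

lemma grad_zero_of_nmem_tsupport {F : Type*} [NormedAddCommGroup F] [InnerProductSpace ℝ F]
    [CompleteSpace F] {w : F → ℝ} {x : F} (hx : x ∉ tsupport w) : gradient w x = 0 := by
  unfold gradient
  have : fderiv ℝ w x = 0 := by
    by_contra hne
    exact hx (support_fderiv_subset ℝ (by simpa [Function.mem_support] using hne))
  rw [this, map_zero]


section INNER
variable {k : ℕ} {N : Fin k → ℕ}

lemma inner_basisVec (i : Fin k) (j : Fin (N i)) (y : Eb N) :
    (inner ℝ y (basisVecF N i j) : ℝ) = y i j := by
  rw [PiLp.inner_apply]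
  simp only [basisVecF, WithLp.equiv_symm_apply, PiLp.toLp_apply]
  rw [Finset.sum_eq_single i]
  · rw [Pi.single_eq_same, EuclideanSpace.inner_single_right]
    simp
  · intro b _ hb
    rw [Pi.single_eq_of_ne hb]
    simp
  · simp

lemma inner_euc {n : ℕ} (a b : EuclideanSpace ℝ (Fin n)) :
    (inner ℝ a b : ℝ) = ∑ j, a j * b j := by
  rw [PiLp.inner_apply]
  simp [RCLike.inner_apply, mul_comm]

lemma inner_lgradF (α : Fin k → Fin k → ℝ) (u : Eb N → ℝ) (x : Eb N) (z : Eb N) :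
    (inner ℝ (lgradF N α u x) z : ℝ) = ∑ i, lamF N α i x * (inner ℝ ((gradient u x) i) (z i) : ℝ) := by
  rw [PiLp.inner_apply]
  apply Finset.sum_congr rfl
  intro i _
  show (inner ℝ (lamF N α i x • (gradient u x) i) (z i) : ℝ) = _
  rw [real_inner_smul_left]

end INNER

section MAIN2
variable {k : ℕ} {N : Fin k → ℕ}

lemma lgradF_continuous (α : Fin k → Fin k → ℝ) (hα : ∀ i j, 0 ≤ α i j)
    {u : Eb N → ℝ} (hu : ContDiff ℝ 1 u) : Continuous (lgradF N α u) := by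
  unfold lgradF
  apply Continuous.comp
  · exact PiLp.continuous_toLp 2 _
  · exact continuous_pi fun i => (lamF_continuous N α hα i).smul
      ((PiLp.proj (𝕜 := ℝ) 2 _ i).continuous.comp (grad_continuous hu))

lemma lgradF_zero (α : Fin k → Fin k → ℝ) {u : Eb N → ℝ} {x : Eb N}
    (hx : x ∉ tsupport u) : lgradF N α u x = 0 := by
  unfold lgradF
  rw [grad_zero_of_nmem_tsupport hx]
  ext i
  simp

lemma key_identity (α : Fin k → Fin k → ℝ)
    (hα : ∀ i j, 0 ≤ α i j) (hα0 : ∀ i j : Fin k, i ≤ j → α i j = 0)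
    (Ω : Set (Eb N)) (hΩ : IsOpen Ω)
    (p : ℝ) (hp : 1 < p)
    (h : Eb N → Eb N) (hh : ContDiffOn ℝ 1 h Ω)
    (u : Eb N → ℝ) (hu : ContDiff ℝ 1 u)
    (hcs : HasCompactSupport u) (hsupp : tsupport u ⊆ Ω) :
    Integrable (fun x => |u x| ^ p * divlamF N α h x) ∧
    Integrable (fun x => (p * |u x| ^ (p - 2) * u x) * (inner ℝ (lgradF N α u x) (h x) : ℝ)) ∧
    ∫ x, |u x| ^ p * divlamF N α h x =
      - ∫ x, (p * |u x| ^ (p - 2) * u x) * (inner ℝ (lgradF N α u x) (h x) : ℝ) := by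
  classical
  set ψ : ℝ → ℝ := fun t => p * |t| ^ (p - 2) * t with hψdef
  set v : Eb N → ℝ := fun x => |u x| ^ p with hvdef
  have hu_diff : Differentiable ℝ u := hu.differentiable one_ne_zero
  have hv_deriv : ∀ x, HasFDerivAt v (ψ (u x) • fderiv ℝ u x) x := fun x =>
    (abs_rpow_hasDerivAt hp (u x)).comp_hasFDerivAt x (hu_diff x).hasFDerivAt
  have hv_fderiv : ∀ x, fderiv ℝ v x = ψ (u x) • fderiv ℝ u x := fun x => (hv_deriv x).fderiv
  have hv_cd : ContDiff ℝ 1 v := by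
    rw [contDiff_one_iff_fderiv]
    refine ⟨fun x => (hv_deriv x).differentiableAt, ?_⟩
    rw [show fderiv ℝ v = fun x => ψ (u x) • fderiv ℝ u x from funext hv_fderiv]
    exact ((psi_continuous hp).comp hu.continuous).smul (hu.continuous_fderiv one_ne_zero)
  have hu0 : ∀ x, x ∉ tsupport u → u x = 0 := fun x hx => image_eq_zero_of_notMem_tsupport hx
  have hv0 : ∀ x, x ∉ tsupport u → v x = 0 := fun x hx => by
    simp only [hvdef, hu0 x hx]
    simp [Real.zero_rpow (by linarith : p ≠ 0)]
  -- the extended vector field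
  set H : Eb N → Eb N := fun x => Set.indicator Ω (fun y => v y • h y) x with hHdef
  have hH_onΩ : ∀ x ∈ Ω, H =ᶠ[nhds x] fun y => v y • h y := fun x hx =>
    Filter.eventually_of_mem (hΩ.mem_nhds hx) fun y hy => Set.indicator_of_mem hy _
  have hH0 : ∀ x, x ∉ tsupport u → H x = 0 := by
    intro x hx
    by_cases hxΩ : x ∈ Ω
    · show Ω.indicator (fun y => v y • h y) x = 0
      rw [Set.indicator_of_mem hxΩ, hv0 x hx, zero_smul]
    · show Ω.indicator (fun y => v y • h y) x = 0
      rw [Set.indicator_of_notMem hxΩ]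
  have hH_out : ∀ x, x ∉ tsupport u → H =ᶠ[nhds x] (fun _ => (0 : Eb N)) := by
    intro x hx
    filter_upwards [(isClosed_tsupport u).isOpen_compl.mem_nhds hx] with y hy
    exact hH0 y hy
  have hH_cd : ContDiff ℝ 1 H := by
    rw [contDiff_iff_contDiffAt]
    intro x
    by_cases hx : x ∈ Ω
    · exact (hv_cd.contDiffAt.smul (hh.contDiffAt (hΩ.mem_nhds hx))).congr_of_eventuallyEq
        (hH_onΩ x hx)
    · exact contDiffAt_const.congr_of_eventuallyEq (hH_out x fun hts => hx (hsupp hts))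
  -- coordinate functions and their derivatives
  set g' : (i : Fin k) → Fin (N i) → Eb N → ℝ :=
    fun i j x => fderiv ℝ (fun y => H y i j) x (basisVecF N i j) with hg'def
  have hgij_cd : ∀ (i : Fin k) (j : Fin (N i)), ContDiff ℝ 1 (fun y => H y i j) := by
    intro i j
    exact ((EuclideanSpace.proj j).comp (PiLp.proj (𝕜 := ℝ) 2 _ i)).contDiff.comp hH_cd
  have htsg : ∀ (i : Fin k) (j : Fin (N i)), tsupport (fun y => H y i j) ⊆ tsupport u := by
    intro i j
    apply closure_minimal _ (isClosed_tsupport u)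
    intro x hx
    by_contra hxs
    have hzz : H x i j = 0 := by rw [hH0 x hxs]; rfl
    exact hx hzz
  have hg'0 : ∀ (i : Fin k) (j : Fin (N i)) (x : Eb N), x ∉ tsupport u → g' i j x = 0 := by
    intro i j x hx
    have hz : fderiv ℝ (fun y => H y i j) x = 0 := by
      by_contra hne
      exact hx (htsg i j (support_fderiv_subset ℝ (by simpa [Function.mem_support] using hne)))
    simp only [hg'def, hz]
    rfl
  have hg'_cont : ∀ (i : Fin k) (j : Fin (N i)), Continuous (g' i j) := fun i j =>
    ((hgij_cd i j).continuous_fderiv one_ne_zero).clm_apply continuous_const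
  have hint1 : ∀ (i : Fin k) (j : Fin (N i)),
      Integrable (fun x => lamF N α i x * g' i j x) := by
    intro i j
    apply Continuous.integrable_of_hasCompactSupport
      ((lamF_continuous N α hα i).mul (hg'_cont i j))
    exact HasCompactSupport.intro hcs fun x hx => by rw [Pi.mul_apply, hg'0 i j x hx, mul_zero]
  -- integration by parts
  have key : ∀ (i : Fin k) (j : Fin (N i)), ∫ x, lamF N α i x * g' i j x = 0 := by
    intro i j
    have h1 : ∀ x, HasLineDerivAt ℝ (lamF N α i) ((fun _ => (0:ℝ)) x) x (basisVecF N i j) :=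
      fun x => lamF_lineDeriv_zero N α (fun i' => hα0 i' i' le_rfl) i j x
    have h2 : ∀ x, HasLineDerivAt ℝ (fun y => H y i j) (g' i j x) x (basisVecF N i j) :=
      fun x => (((hgij_cd i j).differentiable one_ne_zero x).hasFDerivAt).hasLineDerivAt _
    have hint2 : Integrable (fun x => lamF N α i x * H x i j) := by
      apply Continuous.integrable_of_hasCompactSupport
        ((lamF_continuous N α hα i).mul
          (((EuclideanSpace.proj j).comp (PiLp.proj (𝕜 := ℝ) 2 _ i)).continuous.comp
            hH_cd.continuous))
      exact HasCompactSupport.intro hcs fun x hx => by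
        have : H x i j = 0 := by rw [hH0 x hx]; rfl
        show lamF N α i x * H x i j = 0
        rw [this, mul_zero]
    have hint0 : Integrable (fun x => (0:ℝ) * H x i j) := by
      simpa using (integrable_zero (Eb N) ℝ (volume : Measure (Eb N)))
    have := integral_bilinear_hasLineDerivAt_right_eq_neg_left_of_integrable
      (B := ContinuousLinearMap.mul ℝ ℝ) (f := lamF N α i) (f' := fun _ => (0:ℝ))
      (g := fun y => H y i j) (g' := g' i j) (v := basisVecF N i j)
      (by simpa using hint0) (by simpa using hint1 i j)
      (by simpa using hint2) (fun x _ => h1 x) (fun x _ => h2 x)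
    simpa using this
  set F1 : Eb N → ℝ := fun x => v x * divlamF N α h x with hF1def
  set F2 : Eb N → ℝ := fun x => ψ (u x) * (inner ℝ (lgradF N α u x) (h x) : ℝ) with hF2def
  have hfderiv_u_basis : ∀ (x : Eb N) (i : Fin k) (j : Fin (N i)),
      fderiv ℝ u x (basisVecF N i j) = (gradient u x) i j := by
    intro x i j
    rw [← grad_inner, inner_basisVec]
  have hptw : ∀ x, (∑ i, ∑ j, lamF N α i x * g' i j x) = F1 x + F2 x := by
    intro x
    by_cases hx : x ∈ Ω
    · have hd : HasFDerivAt h (fderiv ℝ h x) x :=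
        ((hh.contDiffAt (hΩ.mem_nhds hx)).differentiableAt one_ne_zero).hasFDerivAt
      have hH' : HasFDerivAt H
          (v x • fderiv ℝ h x + (ψ (u x) • fderiv ℝ u x).smulRight (h x)) x :=
        ((hv_deriv x).smul hd).congr_of_eventuallyEq (hH_onΩ x hx)
      have hgval : ∀ (i : Fin k) (j : Fin (N i)), g' i j x =
          v x * (fderiv ℝ h x (basisVecF N i j)) i j
          + ψ (u x) * ((gradient u x) i j * h x i j) := by
        intro i j
        have hPH : HasFDerivAt (fun y => H y i j)
            (((EuclideanSpace.proj j).comp (PiLp.proj (𝕜 := ℝ) 2 _ i)).comp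
              (v x • fderiv ℝ h x + (ψ (u x) • fderiv ℝ u x).smulRight (h x))) x := by
          have hPH' := ((EuclideanSpace.proj j).comp
            (PiLp.proj (𝕜 := ℝ) 2 _ i)).hasFDerivAt.comp x hH'
          exact hPH'
        show fderiv ℝ (fun y => H y i j) x (basisVecF N i j) = _
        rw [hPH.fderiv]
        simp only [ContinuousLinearMap.coe_comp', Function.comp_apply,
          ContinuousLinearMap.add_apply, ContinuousLinearMap.smul_apply,
          ContinuousLinearMap.smulRight_apply, PiLp.add_apply, PiLp.smul_apply,
          PiLp.proj_apply, smul_eq_mul, hfderiv_u_basis x i j]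
        ring
      calc ∑ i, ∑ j, lamF N α i x * g' i j x
          = ∑ i, (v x * (lamF N α i x * ∑ j, (fderiv ℝ h x (basisVecF N i j)) i j)
              + ψ (u x) * (lamF N α i x * ∑ j, (gradient u x) i j * h x i j)) := by
            apply Finset.sum_congr rfl
            intro i _
            calc ∑ j, lamF N α i x * g' i j x
                = ∑ j, ((lamF N α i x * v x) * (fderiv ℝ h x (basisVecF N i j)) i j
                    + (lamF N α i x * ψ (u x)) * ((gradient u x) i j * h x i j)) := by
                  refine Finset.sum_congr rfl fun j _ => ?_
                  rw [hgval i j]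
                  ring
              _ = (lamF N α i x * v x) * (∑ j, (fderiv ℝ h x (basisVecF N i j)) i j)
                  + (lamF N α i x * ψ (u x)) * (∑ j, (gradient u x) i j * h x i j) := by
                  rw [Finset.sum_add_distrib, ← Finset.mul_sum, ← Finset.mul_sum]
              _ = v x * (lamF N α i x * ∑ j, (fderiv ℝ h x (basisVecF N i j)) i j)
                  + ψ (u x) * (lamF N α i x * ∑ j, (gradient u x) i j * h x i j) := by
                  ring
        _ = F1 x + F2 x := by
            rw [Finset.sum_add_distrib, ← Finset.mul_sum, ← Finset.mul_sum]
            show _ = v x * divlamF N α h x + ψ (u x) * (inner ℝ (lgradF N α u x) (h x) : ℝ)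
            rw [inner_lgradF]
            unfold divlamF
            have hie : ∀ i : Fin k, (inner ℝ ((gradient u x) i) ((h x) i) : ℝ)
                = ∑ j, (gradient u x) i j * h x i j := fun i => inner_euc _ _
            simp only [hie]
    · have hxu : x ∉ tsupport u := fun hts => hx (hsupp hts)
      have hL : (∑ i, ∑ j, lamF N α i x * g' i j x) = 0 :=
        Finset.sum_eq_zero fun i _ => Finset.sum_eq_zero fun j _ => by
          rw [hg'0 i j x hxu, mul_zero]
      rw [hL, hF1def, hF2def]
      show (0:ℝ) = v x * divlamF N α h x + ψ (u x) * (inner ℝ (lgradF N α u x) (h x) : ℝ)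
      rw [hv0 x hxu, lgradF_zero α hxu, inner_zero_left, mul_zero, zero_mul, add_zero]
  -- integrability of F1 and F2
  have hDcontOn : ContinuousOn (divlamF N α h) Ω := by
    unfold divlamF
    apply continuousOn_finset_sum
    intro i _
    apply ContinuousOn.mul (lamF_continuous N α hα i).continuousOn
    apply continuousOn_finset_sum
    intro j _
    intro x hx
    have hfc : ContinuousOn (fderiv ℝ h) Ω := hh.continuousOn_fderiv_of_isOpen hΩ le_rfl
    have hcont_eval : Continuous fun L : Eb N →L[ℝ] Eb N => L (basisVecF N i j) i j := by
      have := ((EuclideanSpace.proj j).comp (PiLp.proj (𝕜 := ℝ) 2 _ i)).continuous.comp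
        (ContinuousLinearMap.apply ℝ (Eb N) (basisVecF N i j)).continuous
      exact this
    exact hcont_eval.continuousAt.comp_continuousWithinAt (hfc x hx)
  have hF1cont : Continuous F1 := by
    rw [continuous_iff_continuousAt]
    intro x
    by_cases hx : x ∈ Ω
    · exact hv_cd.continuous.continuousAt.mul (hDcontOn.continuousAt (hΩ.mem_nhds hx))
    · have hxu : x ∉ tsupport u := fun hts => hx (hsupp hts)
      have hev : F1 =ᶠ[nhds x] (fun _ => (0:ℝ)) := by
        filter_upwards [(isClosed_tsupport u).isOpen_compl.mem_nhds hxu] with y hy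
        show v y * divlamF N α h y = 0
        rw [hv0 y hy, zero_mul]
      exact (continuousAt_congr hev).mpr continuousAt_const
  have hF2cont : Continuous F2 := by
    rw [continuous_iff_continuousAt]
    intro x
    by_cases hx : x ∈ Ω
    · exact (((psi_continuous hp).comp hu.continuous).continuousAt).mul
        (ContinuousAt.inner ((lgradF_continuous α hα hu).continuousAt)
          ((hh.continuousOn.continuousAt (hΩ.mem_nhds hx))))
    · have hxu : x ∉ tsupport u := fun hts => hx (hsupp hts)
      have hev : F2 =ᶠ[nhds x] (fun _ => (0:ℝ)) := by
        filter_upwards [(isClosed_tsupport u).isOpen_compl.mem_nhds hxu] with y hy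
        show ψ (u y) * (inner ℝ (lgradF N α u y) (h y) : ℝ) = 0
        rw [lgradF_zero α hy, inner_zero_left, mul_zero]
      exact (continuousAt_congr hev).mpr continuousAt_const
  have hF1i : Integrable (fun x => v x * divlamF N α h x) :=
    hF1cont.integrable_of_hasCompactSupport
      (HasCompactSupport.intro hcs fun x hx => by
        show v x * divlamF N α h x = 0
        rw [hv0 x hx, zero_mul])
  have hF2i : Integrable (fun x => ψ (u x) * (inner ℝ (lgradF N α u x) (h x) : ℝ)) :=
    hF2cont.integrable_of_hasCompactSupport
      (HasCompactSupport.intro hcs fun x hx => by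
        show ψ (u x) * (inner ℝ (lgradF N α u x) (h x) : ℝ) = 0
        rw [lgradF_zero α hx, inner_zero_left, mul_zero])
  have h0 : ∫ x, (∑ i, ∑ j, lamF N α i x * g' i j x) = 0 := by
    rw [integral_finset_sum _ fun i _ => integrable_finset_sum _ fun j _ => hint1 i j]
    refine Finset.sum_eq_zero fun i _ => ?_
    rw [integral_finset_sum _ fun j _ => hint1 i j]
    exact Finset.sum_eq_zero fun j _ => key i j
  have h1 : ∫ x, (F1 x + F2 x) = 0 := by
    rw [show (fun x => F1 x + F2 x) = fun x => ∑ i, ∑ j, lamF N α i x * g' i j x from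
      funext fun x => (hptw x).symm]
    exact h0
  rw [integral_add hF1i hF2i] at h1
  refine ⟨hF1i, hF2i, by linarith⟩

end MAIN2

section HOLDER

lemma holder_real_eq {p : ℝ} (hp : 1 < p) {a b c D : ℝ} (ha : 0 ≤ a) (hb : 0 ≤ b) (hc : 0 ≤ c)
    (hD : 0 < D) :
    (a ^ p * D) ^ ((p - 1) / p) * (b ^ p / D ^ (p - 1) * c ^ p) ^ (1 / p)
      = a ^ (p - 1) * (b * c) := by
  have hp0 : (0:ℝ) < p := by linarith
  have he1 : p * ((p - 1) / p) = p - 1 := by field_simp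
  have he2 : p * (1 / p) = 1 := by field_simp
  have he3 : (p - 1) * (1 / p) = (p - 1) / p := by ring
  have h1 : (a ^ p * D) ^ ((p - 1) / p) = a ^ (p - 1) * D ^ ((p - 1) / p) := by
    rw [Real.mul_rpow (Real.rpow_nonneg ha p) hD.le, ← Real.rpow_mul ha, he1]
  have h2 : (b ^ p / D ^ (p - 1) * c ^ p) ^ (1 / p)
      = b * c * (D ^ ((p - 1) / p))⁻¹ := by
    rw [Real.mul_rpow (div_nonneg (Real.rpow_nonneg hb p) (Real.rpow_nonneg hD.le (p - 1)))
        (Real.rpow_nonneg hc p),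
      Real.div_rpow (Real.rpow_nonneg hb p) (Real.rpow_nonneg hD.le _),
      ← Real.rpow_mul hb, ← Real.rpow_mul hc, ← Real.rpow_mul hD.le, he2, he3,
      Real.rpow_one, Real.rpow_one, div_eq_mul_inv]
    ring
  rw [h1, h2]
  have hDe : D ^ ((p - 1) / p) ≠ 0 := ne_of_gt (Real.rpow_pos_of_pos hD _)
  field_simp

end HOLDER

/-- Mitidieri-type lemma for `Δ_λ`-Laplacians: if `div_λ h > 0` on the open set
`Ω`, then `∫_Ω |u|^p div_λ h ≤ p^p ∫_Ω (|h|^p/(div_λ h)^{p-1}) |∇_λ u|^p`. -/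
theorem hardy_lemma_deltaLambda {k : ℕ} (hk : 0 < k)
    (N : Fin k → ℕ) (hN : ∀ i, 1 ≤ N i)
    (α : Fin k → Fin k → ℝ)
    (hα : ∀ i j, 0 ≤ α i j) (hα0 : ∀ i j : Fin k, i ≤ j → α i j = 0)
    (Ω : Set (Eb N)) (hΩ : IsOpen Ω)
    (p : ℝ) (hp : 1 < p)
    (h : Eb N → Eb N) (hh : ContDiffOn ℝ 1 h Ω)
    (hdiv : ∀ x ∈ Ω, 0 < divlamF N α h x)
    (u : Eb N → ℝ) (hu : ContDiff ℝ 1 u)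
    (hcs : HasCompactSupport u) (hsupp : tsupport u ⊆ Ω)
    (hfin : ∫⁻ x in Ω,
        ENNReal.ofReal (‖h x‖ ^ p / (divlamF N α h x) ^ (p - 1) * ‖lgradF N α u x‖ ^ p) < ⊤) :
    ∫⁻ x in Ω, ENNReal.ofReal (|u x| ^ p * divlamF N α h x) ≤
      ENNReal.ofReal (p ^ p) *
        ∫⁻ x in Ω,
          ENNReal.ofReal
            (‖h x‖ ^ p / (divlamF N α h x) ^ (p - 1) * ‖lgradF N α u x‖ ^ p) := by
  classical
  have hp0 : (0:ℝ) < p := by linarith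
  have hΩm : MeasurableSet Ω := hΩ.measurableSet
  obtain ⟨hF1i, hF2i, hiden⟩ :=
    key_identity α hα hα0 Ω hΩ p hp h hh u hu hcs hsupp
  have hxout : ∀ x, x ∉ Ω → x ∉ tsupport u := fun x hx hts => hx (hsupp hts)
  have hu0 : ∀ x, x ∉ tsupport u → u x = 0 := fun x hx => image_eq_zero_of_notMem_tsupport hx
  set D := divlamF N α h with hD
  set G := lgradF N α u with hG
  set F1 : Eb N → ℝ := fun x => |u x| ^ p * D x with hF1
  set F2 : Eb N → ℝ := fun x => (p * |u x| ^ (p - 2) * u x) * (inner ℝ (G x) (h x) : ℝ) with hF2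
  set A := ∫⁻ x in Ω, ENNReal.ofReal (|u x| ^ p * D x) with hA
  set C := ∫⁻ x in Ω, ENNReal.ofReal (‖h x‖ ^ p / D x ^ (p - 1) * ‖G x‖ ^ p) with hC
  -- A as a real integral
  have hF1zero : ∀ x, x ∉ Ω → F1 x = 0 := by
    intro x hx
    have : u x = 0 := hu0 x (hxout x hx)
    show |u x| ^ p * D x = 0
    rw [this]
    simp [Real.zero_rpow (ne_of_gt hp0)]
  have hF2zero : ∀ x, x ∉ Ω → F2 x = 0 := by
    intro x hx
    show (p * |u x| ^ (p - 2) * u x) * (inner ℝ (G x) (h x) : ℝ) = 0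
    rw [hG, lgradF_zero α (hxout x hx), inner_zero_left, mul_zero]
  have hAeq : A = ENNReal.ofReal (∫ x, F1 x) := by
    rw [hA]
    have h1 : ∫ x, F1 x = ∫ x in Ω, F1 x := by
      rw [← integral_indicator hΩm]
      apply integral_congr_ae
      apply Filter.Eventually.of_forall
      intro x
      by_cases hx : x ∈ Ω
      · rw [Set.indicator_of_mem hx]
      · rw [Set.indicator_of_notMem hx, hF1zero x hx]
    rw [h1, ofReal_integral_eq_lintegral_ofReal (hF1i.restrict)
      ((ae_restrict_iff' hΩm).2 (Filter.Eventually.of_forall fun x hx =>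
        mul_nonneg (Real.rpow_nonneg (abs_nonneg _) _) (hdiv x hx).le))]
  have hAne : A ≠ ⊤ := by rw [hAeq]; exact ENNReal.ofReal_ne_top
  -- step 2/3 : A ≤ ∫⁻ in Ω, ofReal |F2|
  have hstep3 : A ≤ ∫⁻ x in Ω, ENNReal.ofReal |F2 x| := by
    have h2 : ∫ x, F1 x ≤ ∫ x, |F2 x| := by
      rw [hiden]
      calc - ∫ x, F2 x ≤ |∫ x, F2 x| := neg_le_abs _
        _ = ‖∫ x, F2 x‖ := (Real.norm_eq_abs _).symm
        _ ≤ ∫ x, ‖F2 x‖ := norm_integral_le_integral_norm _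
        _ = ∫ x, |F2 x| := by simp [Real.norm_eq_abs]
    have h3 : ENNReal.ofReal (∫ x, |F2 x|) = ∫⁻ x, ENNReal.ofReal |F2 x| :=
      ofReal_integral_eq_lintegral_ofReal hF2i.abs
        (Filter.Eventually.of_forall fun x => abs_nonneg _)
    have h4 : (∫⁻ x, ENNReal.ofReal |F2 x|) = ∫⁻ x in Ω, ENNReal.ofReal |F2 x| := by
      rw [← lintegral_indicator hΩm]
      apply lintegral_congr
      intro x
      by_cases hx : x ∈ Ω
      · rw [Set.indicator_of_mem hx]
      · rw [Set.indicator_of_notMem hx, hF2zero x hx]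
        simp
    calc A = ENNReal.ofReal (∫ x, F1 x) := hAeq
      _ ≤ ENNReal.ofReal (∫ x, |F2 x|) := ENNReal.ofReal_le_ofReal h2
      _ = ∫⁻ x in Ω, ENNReal.ofReal |F2 x| := by rw [h3, h4]
  -- pointwise Hölder splitting on Ω
  set q := Real.conjExponent p with hqdef
  have hqp : q.HolderConjugate p := (Real.HolderConjugate.conjExponent hp).symm
  have h1q : 1 / q = (p - 1) / p := by rw [hqdef, Real.conjExponent, one_div_div]
  set f : Eb N → ENNReal := fun x => ENNReal.ofReal (|u x| ^ p * D x) with hf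
  set g : Eb N → ENNReal := fun x => ENNReal.ofReal (‖h x‖ ^ p / D x ^ (p - 1) * ‖G x‖ ^ p)
    with hg
  have hptwise : ∀ x ∈ Ω, ENNReal.ofReal |F2 x| ≤
      ENNReal.ofReal p * (f x ^ (1 / q) * g x ^ (1 / p)) := by
    intro x hx
    have hDx : 0 < D x := hdiv x hx
    have habs : |F2 x| ≤ p * |u x| ^ (p - 1) * (‖G x‖ * ‖h x‖) := by
      show |(p * |u x| ^ (p - 2) * u x) * (inner ℝ (G x) (h x) : ℝ)| ≤ _
      rw [abs_mul, psi_abs_eq hp]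
      exact mul_le_mul_of_nonneg_left
        ((abs_real_inner_le_norm _ _).trans (le_of_eq rfl))
        (mul_nonneg hp0.le (Real.rpow_nonneg (abs_nonneg _) _))
    have hkey : |u x| ^ (p - 1) * (‖G x‖ * ‖h x‖)
        = (|u x| ^ p * D x) ^ ((p - 1) / p)
          * (‖h x‖ ^ p / D x ^ (p - 1) * ‖G x‖ ^ p) ^ (1 / p) := by
      rw [holder_real_eq hp (abs_nonneg (u x)) (norm_nonneg (h x)) (norm_nonneg (G x)) hDx]
      ring
    calc ENNReal.ofReal |F2 x|
        ≤ ENNReal.ofReal (p * (|u x| ^ (p - 1) * (‖G x‖ * ‖h x‖))) := by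
          apply ENNReal.ofReal_le_ofReal
          rw [← mul_assoc]
          exact habs
      _ = ENNReal.ofReal p * ENNReal.ofReal ((|u x| ^ p * D x) ^ ((p - 1) / p)
            * (‖h x‖ ^ p / D x ^ (p - 1) * ‖G x‖ ^ p) ^ (1 / p)) := by
          rw [hkey, ENNReal.ofReal_mul hp0.le]
      _ = ENNReal.ofReal p * (f x ^ (1 / q) * g x ^ (1 / p)) := by
          rw [ENNReal.ofReal_mul (Real.rpow_nonneg
            (mul_nonneg (Real.rpow_nonneg (abs_nonneg _) _) hDx.le) _), hf, hg, h1q,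
            ENNReal.ofReal_rpow_of_nonneg
              (mul_nonneg (Real.rpow_nonneg (abs_nonneg _) _) hDx.le)
              (div_nonneg (by linarith) hp0.le),
            ENNReal.ofReal_rpow_of_nonneg
              (mul_nonneg (div_nonneg (Real.rpow_nonneg (norm_nonneg _) _)
                (Real.rpow_nonneg hDx.le _)) (Real.rpow_nonneg (norm_nonneg _) _))
              (by positivity : (0:ℝ) ≤ 1 / p)]
  -- measurability
  have hDm : Measurable D := by
    rw [hD]
    unfold divlamF
    apply Finset.measurable_sum
    intro i _
    apply ((lamF_continuous N α hα i).measurable).mul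
    apply Finset.measurable_sum
    intro j _
    have hcont_eval : Continuous fun L : Eb N →L[ℝ] Eb N => L (basisVecF N i j) i j := by
      have := ((EuclideanSpace.proj j).comp (PiLp.proj (𝕜 := ℝ) 2 _ i)).continuous.comp
        (ContinuousLinearMap.apply ℝ (Eb N) (basisVecF N i j)).continuous
      exact this
    exact hcont_eval.measurable.comp (measurable_fderiv ℝ h)
  have hfm : AEMeasurable f (volume.restrict Ω) := by
    apply ENNReal.measurable_ofReal.comp_aemeasurable
    exact ((hu.continuous.abs.measurable.pow measurable_const).mul hDm).aemeasurable
  have hgm : AEMeasurable g (volume.restrict Ω) := by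
    apply ENNReal.measurable_ofReal.comp_aemeasurable
    apply AEMeasurable.mul
    · apply AEMeasurable.div
      · exact ((hh.continuousOn.norm.aemeasurable hΩm).pow aemeasurable_const)
      · exact ((hDm.pow measurable_const).aemeasurable)
    · exact (((lgradF_continuous α hα hu).norm.measurable.pow measurable_const).aemeasurable)
  -- Hölder
  have hhold : ∫⁻ x in Ω, f x ^ (1 / q) * g x ^ (1 / p) ≤ A ^ (1 / q) * C ^ (1 / p) := by
    have hf1 : AEMeasurable (fun x => f x ^ (1 / q)) (volume.restrict Ω) :=
      hfm.pow aemeasurable_const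
    have hg1 : AEMeasurable (fun x => g x ^ (1 / p)) (volume.restrict Ω) :=
      hgm.pow aemeasurable_const
    have hres := ENNReal.lintegral_mul_le_Lp_mul_Lq (volume.restrict Ω) hqp hf1 hg1
    have e1 : ∀ x : Eb N, (f x ^ (1 / q)) ^ q = f x := by
      intro x
      rw [← ENNReal.rpow_mul, one_div, inv_mul_cancel₀ hqp.ne_zero, ENNReal.rpow_one]
    have e2 : ∀ x : Eb N, (g x ^ (1 / p)) ^ p = g x := by
      intro x
      rw [← ENNReal.rpow_mul, one_div, inv_mul_cancel₀ (ne_of_gt hp0), ENNReal.rpow_one]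
    calc ∫⁻ x in Ω, f x ^ (1 / q) * g x ^ (1 / p) ≤
        (∫⁻ x in Ω, (f x ^ (1 / q)) ^ q) ^ (1 / q) * (∫⁻ x in Ω, (g x ^ (1 / p)) ^ p) ^ (1 / p) :=
          hres
      _ = A ^ (1 / q) * C ^ (1 / p) := by
          rw [lintegral_congr e1, lintegral_congr e2]
  -- assemble
  have hmain : A ≤ ENNReal.ofReal p * (A ^ (1 / q) * C ^ (1 / p)) := by
    calc A ≤ ∫⁻ x in Ω, ENNReal.ofReal |F2 x| := hstep3
      _ ≤ ∫⁻ x in Ω, ENNReal.ofReal p * (f x ^ (1 / q) * g x ^ (1 / p)) := by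
          apply lintegral_mono_ae
          exact (ae_restrict_iff' hΩm).2 (Filter.Eventually.of_forall hptwise)
      _ = ENNReal.ofReal p * ∫⁻ x in Ω, f x ^ (1 / q) * g x ^ (1 / p) :=
          lintegral_const_mul' _ _ ENNReal.ofReal_ne_top
      _ ≤ ENNReal.ofReal p * (A ^ (1 / q) * C ^ (1 / p)) := by
          exact mul_le_mul_right hhold _
  show A ≤ ENNReal.ofReal (p ^ p) * C
  by_cases hA0 : A = 0
  · rw [hA0]
    exact zero_le
  · have hApos : (0:ENNReal) < A := pos_iff_ne_zero.2 hA0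
    have hq0 : (0:ℝ) ≤ 1 / q := hqp.one_div_nonneg
    have hAq_ne : A ^ (1 / q) ≠ 0 := (ENNReal.rpow_pos hApos hAne).ne'
    have hAq_top : A ^ (1 / q) ≠ ⊤ := ENNReal.rpow_ne_top_of_nonneg hq0 hAne
    have hsplit : A = A ^ (1 / p) * A ^ (1 / q) := by
      rw [← ENNReal.rpow_add _ _ hA0 hAne]
      rw [show 1 / p + 1 / q = 1 by rw [one_div, one_div]; exact hqp.symm.inv_add_inv_eq_one]
      rw [ENNReal.rpow_one]
    have hstep : A ^ (1 / p) ≤ ENNReal.ofReal p * C ^ (1 / p) := by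
      have h5 : A ^ (1 / p) * A ^ (1 / q) ≤ (ENNReal.ofReal p * C ^ (1 / p)) * A ^ (1 / q) := by
        calc A ^ (1 / p) * A ^ (1 / q) = A := hsplit.symm
          _ ≤ ENNReal.ofReal p * (A ^ (1 / q) * C ^ (1 / p)) := hmain
          _ = (ENNReal.ofReal p * C ^ (1 / p)) * A ^ (1 / q) := by ring
      exact (ENNReal.mul_le_mul_iff_left hAq_ne hAq_top).1 h5
    calc A = (A ^ (1 / p)) ^ p := by
          rw [← ENNReal.rpow_mul, one_div, inv_mul_cancel₀ (ne_of_gt hp0), ENNReal.rpow_one]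
      _ ≤ (ENNReal.ofReal p * C ^ (1 / p)) ^ p := ENNReal.rpow_le_rpow hstep hp0.le
      _ = ENNReal.ofReal (p ^ p) * C := by
          rw [ENNReal.mul_rpow_of_nonneg _ _ hp0.le,
            ENNReal.ofReal_rpow_of_nonneg hp0.le hp0.le, ← ENNReal.rpow_mul, one_div,
            inv_mul_cancel₀ (ne_of_gt hp0), ENNReal.rpow_one]


end
end
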